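/- arXiv:1707.08314 — 3 statements merged into one kernel-verified Lean document; each statement's English description precedes it below -/
import Mathlib

section
/- Let H be a complex inner product space, and let σ, τ ∈ H satisfy ‖σ‖ = ‖τ‖ = 1 and ⟨σ, τ⟩ = 0 with respect to an inner product ⟨·,·⟩₁. Let ⟨·,·⟩₂ be a second inner product on H such that for some ε ∈ (0,1) and μ ∈ ℝ, every s in the span of σ and τ satisfies 2^{μ-ε}‖s‖₂ ≤ ‖s‖₁ ≤ 2^{μ+ε}‖s‖₂. Then |⟨σ/‖σ‖₂, τ/‖τ‖₂⟩₂| ≤ C ε for a constant C depending only on μ (and not on ε, σ, τ). -/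
private lemma two_rpow_sub_one_le (t : ℝ) (h0 : 0 ≤ t) (h4 : t ≤ 4) :
    (2:ℝ) ^ t - 1 ≤ 16 * t := by
  have hlog : Real.log 2 ≤ 1 := by have := Real.log_two_lt_d9; linarith
  have hlog0 : 0 ≤ Real.log 2 := Real.log_nonneg one_le_two
  have h16 : (2:ℝ) ^ t ≤ 16 := by
    calc (2:ℝ) ^ t ≤ (2:ℝ) ^ (4:ℝ) := Real.rpow_le_rpow_of_exponent_le one_le_two h4
    _ = 16 := by
      rw [show (4:ℝ) = ((4:ℕ):ℝ) by norm_num, Real.rpow_natCast]; norm_num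
  have hdef : (2:ℝ) ^ t = Real.exp (Real.log 2 * t) := Real.rpow_def_of_pos (by norm_num) t
  set x := Real.log 2 * t with hx
  have hxpos : 0 ≤ x := mul_nonneg hlog0 h0
  have h1 : -x + 1 ≤ Real.exp (-x) := Real.add_one_le_exp (-x)
  have h2 : Real.exp (-x) * Real.exp x = 1 := by rw [← Real.exp_add]; simp
  have h3 : 0 < Real.exp x := Real.exp_pos x
  have h5 : Real.exp x - 1 ≤ x * Real.exp x := by nlinarith
  have h16' : Real.exp x ≤ 16 := hdef ▸ h16
  rw [hdef]
  nlinarith [mul_nonneg h0 (Real.exp_pos x).le]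


private lemma scalar_bound (ε D r n : ℝ) (hε0 : 0 < ε) (hD1 : 1 ≤ D)
    (hD64 : D - 1 ≤ 64 * ε) (hup : n ^ 2 ≤ 2 * D) (hlow : 2 ≤ D * n ^ 2)
    (hpq : n ^ 2 = 1 + 2 * r + 1) : |r| ≤ 64 * ε := by
  rw [abs_le]
  refine ⟨?_, by linarith⟩
  nlinarith

/-- Near-isometric comparability of two Hermitian inner products preserves
near-orthogonality: if `σ, τ` are `⟨·,·⟩₁`-orthonormal and every `s` in their span
satisfies `2^(μ-ε)‖s‖₂ ≤ ‖s‖₁ ≤ 2^(μ+ε)‖s‖₂`, then the `⟨·,·⟩₂`-normalized vectors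
have inner product of modulus at most `C·ε`, with `C = C(μ)`. -/
theorem stmt_3 (μ : ℝ) :
    ∃ C : ℝ, 0 < C ∧
      ∀ (V : Type) [NormedAddCommGroup V] [InnerProductSpace ℂ V]
        (inner2 : V → V → ℂ)
        (_ : ∀ x y, inner2 y x = starRingEnd ℂ (inner2 x y))
        (_ : ∀ x y z, inner2 (x + y) z = inner2 x z + inner2 y z)
        (_ : ∀ (c : ℂ) (x y : V), inner2 (c • x) y = starRingEnd ℂ c * inner2 x y)
        (_ : ∀ x, 0 ≤ (inner2 x x).re)
        (_ : ∀ x, x ≠ 0 → 0 < (inner2 x x).re)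
        (norm2 : V → ℝ) (_ : ∀ x, norm2 x = Real.sqrt (inner2 x x).re)
        (ε : ℝ) (_ : 0 < ε) (_ : ε < 1)
        (σ τ : V) (_ : ‖σ‖ = 1) (_ : ‖τ‖ = 1) (_ : (inner ℂ σ τ : ℂ) = 0)
        (_ : ∀ s ∈ Submodule.span ℂ ({σ, τ} : Set V),
          (2:ℝ) ^ (μ - ε) * norm2 s ≤ ‖s‖ ∧ ‖s‖ ≤ (2:ℝ) ^ (μ + ε) * norm2 s),
        ‖inner2 ((norm2 σ)⁻¹ • σ) ((norm2 τ)⁻¹ • τ)‖ ≤ C * ε := by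
  refine ⟨128, by norm_num, ?_⟩
  intro V _ _ inner2 hsymm haddl hsmull hre hpos norm2 hn2 ε hε0 hε1 σ τ hσ hτ horth hcomp
  -- derived sesquilinearity
  have hsmulr : ∀ (c : ℂ) (x y : V), inner2 x (c • y) = c * inner2 x y := by
    intro c x y
    rw [hsymm (c • y) x, hsmull, map_mul, Complex.conj_conj, hsymm x y, Complex.conj_conj]
  have haddr : ∀ x y z : V, inner2 x (y + z) = inner2 x y + inner2 x z := by
    intro x y z
    rw [hsymm (y + z) x, haddl, map_add, hsymm x y, hsymm x z, Complex.conj_conj,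
      Complex.conj_conj]
  have hre_eq : ∀ x, (inner2 x x).re = norm2 x ^ 2 := by
    intro x; rw [hn2, Real.sq_sqrt (hre x)]
  have hn2nonneg : ∀ x, 0 ≤ norm2 x := fun x => by rw [hn2]; exact Real.sqrt_nonneg _
  have hn2smul : ∀ (c : ℂ) (x : V), norm2 (c • x) = ‖c‖ * norm2 x := by
    intro c x
    have h1 : inner2 (c • x) (c • x) = (Complex.normSq c : ℂ) * inner2 x x := by
      rw [hsmull, hsmulr, Complex.normSq_eq_conj_mul_self]; ring
    have h2 : ((Complex.normSq c : ℂ) * inner2 x x).re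
        = Complex.normSq c * (inner2 x x).re := by
      simp [Complex.mul_re]
    rw [hn2, hn2, h1, h2, Real.sqrt_mul (Complex.normSq_nonneg c), Complex.norm_def]
  -- polarization
  have hpol : ∀ x y : V,
      norm2 (x + y) ^ 2 = norm2 x ^ 2 + 2 * (inner2 x y).re + norm2 y ^ 2 := by
    intro x y
    have hx : inner2 (x + y) (x + y)
        = inner2 x x + inner2 x y + inner2 y x + inner2 y y := by
      rw [haddl, haddr, haddr]; ring
    have h := congrArg Complex.re hx
    simp only [Complex.add_re] at h
    rw [hre_eq (x + y), hre_eq x, hre_eq y] at h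
    have hyx : (inner2 y x).re = (inner2 x y).re := by rw [hsymm x y, Complex.conj_re]
    linarith
  -- positivity of norms
  have hσne : σ ≠ 0 := by intro h; rw [h, norm_zero] at hσ; norm_num at hσ
  have hτne : τ ≠ 0 := by intro h; rw [h, norm_zero] at hτ; norm_num at hτ
  have hnσ : 0 < norm2 σ := by rw [hn2]; exact Real.sqrt_pos.mpr (hpos σ hσne)
  have hnτ : 0 < norm2 τ := by rw [hn2]; exact Real.sqrt_pos.mpr (hpos τ hτne)
  have hσmem : σ ∈ Submodule.span ℂ ({σ, τ} : Set V) := Submodule.subset_span (by simp)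
  have hτmem : τ ∈ Submodule.span ℂ ({σ, τ} : Set V) := Submodule.subset_span (by simp)
  set L : ℝ := (2:ℝ) ^ (μ - ε) with hLdef
  set U : ℝ := (2:ℝ) ^ (μ + ε) with hUdef
  have hL : 0 < L := Real.rpow_pos_of_pos two_pos _
  have hU : 0 < U := Real.rpow_pos_of_pos two_pos _
  obtain ⟨h1σ, h2σ⟩ := hcomp σ hσmem
  obtain ⟨h1τ, h2τ⟩ := hcomp τ hτmem
  rw [hσ] at h1σ h2σ
  rw [hτ] at h1τ h2τ
  set a : ℝ := (norm2 σ)⁻¹ with hadef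
  set b : ℝ := (norm2 τ)⁻¹ with hbdef
  have hainv : a * norm2 σ = 1 := inv_mul_cancel₀ (ne_of_gt hnσ)
  have hbinv : b * norm2 τ = 1 := inv_mul_cancel₀ (ne_of_gt hnτ)
  have ha0 : (0:ℝ) < a := by positivity
  have hb0 : (0:ℝ) < b := by positivity
  have haL : L ≤ a := by
    have h := mul_le_mul_of_nonneg_right h1σ ha0.le
    calc L = L * (norm2 σ * a) := by rw [mul_comm (norm2 σ) a, hainv, mul_one]
      _ = L * norm2 σ * a := by ring
      _ ≤ 1 * a := h
      _ = a := one_mul a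
  have haU : a ≤ U := by
    have h := mul_le_mul_of_nonneg_right h2σ ha0.le
    calc a = 1 * a := (one_mul a).symm
      _ ≤ U * norm2 σ * a := h
      _ = U * (norm2 σ * a) := by ring
      _ = U := by rw [mul_comm (norm2 σ) a, hainv, mul_one]
  have hbL : L ≤ b := by
    have h := mul_le_mul_of_nonneg_right h1τ hb0.le
    calc L = L * (norm2 τ * b) := by rw [mul_comm (norm2 τ) b, hbinv, mul_one]
      _ = L * norm2 τ * b := by ring
      _ ≤ 1 * b := h
      _ = b := one_mul b
  have hbU : b ≤ U := by
    have h := mul_le_mul_of_nonneg_right h2τ hb0.le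
    calc b = 1 * b := (one_mul b).symm
      _ ≤ U * norm2 τ * b := h
      _ = U * (norm2 τ * b) := by ring
      _ = U := by rw [mul_comm (norm2 τ) b, hbinv, mul_one]
  -- key quantity D = 2^(4ε)
  set D : ℝ := (2:ℝ) ^ (4 * ε) with hDdef
  have hD0 : 0 < D := Real.rpow_pos_of_pos two_pos _
  have hD1 : (1:ℝ) ≤ D := by
    rw [hDdef, show (1:ℝ) = (2:ℝ) ^ (0:ℝ) by simp]
    exact Real.rpow_le_rpow_of_exponent_le one_le_two (by positivity)
  have hD64 : D - 1 ≤ 64 * ε := by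
    have := two_rpow_sub_one_le (4 * ε) (by positivity) (by linarith)
    linarith
  have hU2 : U ^ 2 = L ^ 2 * D := by
    rw [sq, sq, hUdef, hLdef, hDdef, ← Real.rpow_add two_pos, ← Real.rpow_add two_pos,
      ← Real.rpow_add two_pos]
    congr 1; ring
  -- main estimate for a pair of norm2-unit vectors
  have key : ∀ p q : V, norm2 p = 1 → norm2 q = 1 →
      p + q ∈ Submodule.span ℂ ({σ, τ} : Set V) →
      2 * L ^ 2 ≤ ‖p + q‖ ^ 2 → ‖p + q‖ ^ 2 ≤ 2 * U ^ 2 →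
      |(inner2 p q).re| ≤ 64 * ε := by
    intro p q hp hq hmem hlow hup
    obtain ⟨hc1, hc2⟩ := hcomp _ hmem
    set n : ℝ := norm2 (p + q) with hn
    have hn0 : 0 ≤ n := hn2nonneg _
    have hnorm0 : 0 ≤ ‖p + q‖ := norm_nonneg _
    have hLn : 0 ≤ L * n := mul_nonneg hL.le hn0
    have hsq1 : (L * n) ^ 2 ≤ ‖p + q‖ ^ 2 := pow_le_pow_left₀ hLn hc1 2
    have hsq2 : ‖p + q‖ ^ 2 ≤ (U * n) ^ 2 := pow_le_pow_left₀ hnorm0 hc2 2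
    have hnup : n ^ 2 ≤ 2 * D := by
      have e1 : L ^ 2 * n ^ 2 ≤ L ^ 2 * (2 * D) := by
        calc L ^ 2 * n ^ 2 = (L * n) ^ 2 := by ring
          _ ≤ ‖p + q‖ ^ 2 := hsq1
          _ ≤ 2 * U ^ 2 := hup
          _ = L ^ 2 * (2 * D) := by rw [hU2]; ring
      exact le_of_mul_le_mul_left e1 (pow_pos hL 2)
    have hnlow : 2 ≤ D * n ^ 2 := by
      have e2 : L ^ 2 * 2 ≤ L ^ 2 * (D * n ^ 2) := by
        calc L ^ 2 * 2 = 2 * L ^ 2 := by ring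
          _ ≤ ‖p + q‖ ^ 2 := hlow
          _ ≤ (U * n) ^ 2 := hsq2
          _ = U ^ 2 * n ^ 2 := by ring
          _ = L ^ 2 * (D * n ^ 2) := by rw [hU2]; ring
      exact le_of_mul_le_mul_left e2 (pow_pos hL 2)
    have hpq := hpol p q
    rw [hp, hq] at hpq
    have hpq' : n ^ 2 = 1 + 2 * (inner2 p q).re + 1 := by rw [hn, hpq]; norm_num
    exact scalar_bound ε D _ n hε0 hD1 hD64 hnup hnlow hpq' 
  -- instantiate
  rw [← Complex.coe_smul, ← Complex.coe_smul]
  set x : V := ((a : ℂ)) • σ with hxdef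
  set y : V := ((b : ℂ)) • τ with hydef
  have hax : norm2 x = 1 := by
    rw [hxdef, hn2smul, Complex.norm_real, Real.norm_eq_abs, abs_of_pos (by positivity : (0:ℝ) < a), hainv]
  have hby : norm2 y = 1 := by
    rw [hydef, hn2smul, Complex.norm_real, Real.norm_eq_abs, abs_of_pos (by positivity : (0:ℝ) < b), hbinv]
  have hIy : norm2 (Complex.I • y) = 1 := by
    rw [hn2smul, Complex.norm_I, one_mul, hby]
  have hxnorm : ‖x‖ = a := by
    rw [hxdef, norm_smul, Complex.norm_real, hσ, mul_one, Real.norm_eq_abs,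
      abs_of_pos (by positivity : (0:ℝ) < a)]
  have hynorm : ‖y‖ = b := by
    rw [hydef, norm_smul, Complex.norm_real, hτ, mul_one, Real.norm_eq_abs,
      abs_of_pos (by positivity : (0:ℝ) < b)]
  have hIynorm : ‖Complex.I • y‖ = b := by
    rw [norm_smul, Complex.norm_I, one_mul, hynorm]
  have hinner_xy : (inner ℂ x y : ℂ) = 0 := by
    rw [hxdef, hydef, inner_smul_left, inner_smul_right, horth]; ring
  have hinner_xIy : (inner ℂ x (Complex.I • y) : ℂ) = 0 := by
    rw [inner_smul_right, hinner_xy]; ring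
  have hxy_norm : ‖x + y‖ ^ 2 = a ^ 2 + b ^ 2 := by
    have := norm_add_sq (𝕜 := ℂ) x y
    rw [hinner_xy] at this
    simpa [hxnorm, hynorm] using this
  have hxIy_norm : ‖x + Complex.I • y‖ ^ 2 = a ^ 2 + b ^ 2 := by
    have := norm_add_sq (𝕜 := ℂ) x (Complex.I • y)
    rw [hinner_xIy] at this
    simpa [hxnorm, hIynorm] using this
  have hmem1 : x + y ∈ Submodule.span ℂ ({σ, τ} : Set V) :=
    Submodule.add_mem _ (Submodule.smul_mem _ _ hσmem) (Submodule.smul_mem _ _ hτmem)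
  have hmem2 : x + Complex.I • y ∈ Submodule.span ℂ ({σ, τ} : Set V) :=
    Submodule.add_mem _ (Submodule.smul_mem _ _ hσmem)
      (Submodule.smul_mem _ _ (Submodule.smul_mem _ _ hτmem))
  have hab_low : 2 * L ^ 2 ≤ a ^ 2 + b ^ 2 := by
    have h1 : L ^ 2 ≤ a ^ 2 := pow_le_pow_left₀ hL.le haL 2
    have h2 : L ^ 2 ≤ b ^ 2 := pow_le_pow_left₀ hL.le hbL 2
    linarith
  have hab_up : a ^ 2 + b ^ 2 ≤ 2 * U ^ 2 := by
    have h1 : a ^ 2 ≤ U ^ 2 := pow_le_pow_left₀ ha0.le haU 2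
    have h2 : b ^ 2 ≤ U ^ 2 := pow_le_pow_left₀ hb0.le hbU 2
    linarith
  have hRe := key x y hax hby hmem1 (by rw [hxy_norm]; exact hab_low)
    (by rw [hxy_norm]; exact hab_up)
  have hIm := key x (Complex.I • y) hax hIy hmem2 (by rw [hxIy_norm]; exact hab_low)
    (by rw [hxIy_norm]; exact hab_up)
  have him : (inner2 x (Complex.I • y)).re = -(inner2 x y).im := by
    rw [hsmulr]; simp [Complex.mul_re]
  rw [him, abs_neg] at hIm
  calc ‖inner2 x y‖ ≤ |(inner2 x y).re| + |(inner2 x y).im| :=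
        Complex.norm_le_abs_re_add_abs_im _
    _ ≤ 128 * ε := by linarith
end

section
/- The ideal I ⊆ ℂ[z₁,z₂,z₃] generated by f₁ = z₁² − z₁z₂z₃, f₂ = z₂² − z₃³, f₃ = z₃² − z₁³ is not a homogeneous ideal. Equivalently, the polynomials z₁², z₂², z₃² do not all belong to I. -/
open MvPolynomial

lemma aux_eval_one (I : Ideal (MvPolynomial (Fin 3) ℂ))
    (hI : I = Ideal.span ({X 0 ^ 2 - X 0 * X 1 * X 2, X 1 ^ 2 - X 2 ^ 3,
      X 2 ^ 2 - X 0 ^ 3} : Set (MvPolynomial (Fin 3) ℂ))) :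
    ∀ p ∈ I, eval (fun _ => (1:ℂ)) p = 0 := by
  intro p hp
  rw [hI] at hp
  have : Ideal.span ({X 0 ^ 2 - X 0 * X 1 * X 2, X 1 ^ 2 - X 2 ^ 3,
      X 2 ^ 2 - X 0 ^ 3} : Set (MvPolynomial (Fin 3) ℂ)) ≤
      RingHom.ker (eval (fun _ => (1:ℂ))) := by
    rw [Ideal.span_le]
    rintro q (rfl | rfl | rfl) <;> simp [RingHom.mem_ker]
  exact this hp

lemma aux_X2sq_not_mem (I : Ideal (MvPolynomial (Fin 3) ℂ))
    (hI : I = Ideal.span ({X 0 ^ 2 - X 0 * X 1 * X 2, X 1 ^ 2 - X 2 ^ 3,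
      X 2 ^ 2 - X 0 ^ 3} : Set (MvPolynomial (Fin 3) ℂ))) :
    (X 2 ^ 2 : MvPolynomial (Fin 3) ℂ) ∉ I := by
  intro h
  have := aux_eval_one I hI _ h
  simp at this

/-- Example 1 of Section 3.4: the ideal of `ℂ[z₁,z₂,z₃]` generated by
`z₁² - z₁z₂z₃`, `z₂² - z₃³`, `z₃² - z₁³` is not homogeneous; equivalently the
polynomials `z₁², z₂², z₃²` do not all belong to it. -/
theorem stmt_13 (f₁ f₂ f₃ : MvPolynomial (Fin 3) ℂ)
    (h₁ : f₁ = X 0 ^ 2 - X 0 * X 1 * X 2)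
    (h₂ : f₂ = X 1 ^ 2 - X 2 ^ 3)
    (h₃ : f₃ = X 2 ^ 2 - X 0 ^ 3)
    (I : Ideal (MvPolynomial (Fin 3) ℂ))
    (hI : I = Ideal.span ({f₁, f₂, f₃} : Set (MvPolynomial (Fin 3) ℂ))) :
    (¬ ∃ S : Set (MvPolynomial (Fin 3) ℂ),
        (∀ p ∈ S, ∃ d : ℕ, p.IsHomogeneous d) ∧ I = Ideal.span S) ∧
    ¬ (X 0 ^ 2 ∈ I ∧ X 1 ^ 2 ∈ I ∧ X 2 ^ 2 ∈ I) := by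
  subst h₁ h₂ h₃
  have hnot := aux_X2sq_not_mem I hI
  letI : GradedAlgebra (homogeneousSubmodule (Fin 3) ℂ) := MvPolynomial.gradedAlgebra
  constructor
  · rintro ⟨S, hS, hspan⟩
    have hhom : I.IsHomogeneous (homogeneousSubmodule (Fin 3) ℂ) := by
      rw [hspan]
      refine Ideal.homogeneous_span _ _ fun x hx => ?_
      obtain ⟨d, hd⟩ := hS x hx
      exact ⟨d, (mem_homogeneousSubmodule d x).2 hd⟩
    have hf₃ : (X 2 ^ 2 - X 0 ^ 3 : MvPolynomial (Fin 3) ℂ) ∈ I := by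
      rw [hI]
      exact Ideal.subset_span (by simp)
    have hcomp := hhom 2 hf₃
    have hdec : (DirectSum.decompose (homogeneousSubmodule (Fin 3) ℂ)
        (X 2 ^ 2 - X 0 ^ 3 : MvPolynomial (Fin 3) ℂ) 2 : MvPolynomial (Fin 3) ℂ)
        = X 2 ^ 2 := by
      have m1 : (X 2 ^ 2 : MvPolynomial (Fin 3) ℂ) ∈ homogeneousSubmodule (Fin 3) ℂ 2 :=
        (mem_homogeneousSubmodule _ _).2 (by simpa using (isHomogeneous_X ℂ (2 : Fin 3)).pow 2)
      have m2 : (X 0 ^ 3 : MvPolynomial (Fin 3) ℂ) ∈ homogeneousSubmodule (Fin 3) ℂ 3 :=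
        (mem_homogeneousSubmodule _ _).2 (by simpa using (isHomogeneous_X ℂ (0 : Fin 3)).pow 3)
      rw [DirectSum.decompose_sub, DirectSum.sub_apply, AddSubgroupClass.coe_sub,
        DirectSum.decompose_of_mem_same _ m1, DirectSum.decompose_of_mem_ne _ m2 (by norm_num),
        sub_zero]
    rw [hdec] at hcomp
    exact hnot hcomp
  · rintro ⟨-, -, h⟩
    exact hnot h
end

section
/- Let H be a complex Hilbert space and (e_d)_{d∈Γ} an orthogonal family indexed by a set Γ ⊆ ℝ bounded below with Γ ⊆ (1/k!)ℤ. For r ∈ (0,1] define the rescaled inner product ⟨x, y⟩_r = Σ_{d∈Γ} r^{2d+2n} x_d \overline{y_d} for x = Σ x_d e_d, y = Σ y_d e_d (whenever convergent). If s = Σ_{d∈Γ} s_d e_d with ‖s‖_1 < ∞ and s ≠ 0, then lim_{r→0} (log ‖s‖_r²)/(2 log r) − n = min{ d ∈ Γ : s_d ≠ 0 }. -/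
open Set Filter

/-- On a cone, the degree of a section equals the lowest degree appearing in its
homogeneous decomposition: for coefficients `s_d` (supported on `Γ ⊆ (1/k!)ℤ` bounded
below, square-summable, not all zero) and `‖s‖_r² = Σ_d r^(2d+2n) |s_d|²`, the set
`{d ∈ Γ : s_d ≠ 0}` has a least element `dmin` and
`lim_{r→0⁺} log(‖s‖_r²)/(2 log r) - n = dmin`. -/
theorem stmt_15 (n k : ℕ) (hn : 1 ≤ n) (hk : 1 ≤ k)
    (Γ : Set ℝ) (hΓ : ∀ d ∈ Γ, ∃ m : ℤ, d = (m : ℝ) / (Nat.factorial k))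
    (hbdd : BddBelow Γ)
    (s : ℝ → ℂ) (hsupp : ∀ d ∉ Γ, s d = 0)
    (hsum : Summable fun d : Γ => ‖s d.1‖ ^ 2)
    (hne : ∃ d, s d ≠ 0) :
    ∃ dmin : ℝ, IsLeast {d | d ∈ Γ ∧ s d ≠ 0} dmin ∧
      Tendsto
        (fun r : ℝ =>
          Real.log (∑' d : Γ, r ^ (2 * d.1 + 2 * (n : ℝ)) * ‖s d.1‖ ^ 2) /
              (2 * Real.log r) - n)
        (nhdsWithin 0 (Ioi 0)) (nhds dmin) := by
  obtain ⟨d0, hd0⟩ := hne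
  have hd0Γ : d0 ∈ Γ := by
    by_contra h; exact hd0 (hsupp d0 h)
  set kf : ℝ := (Nat.factorial k : ℝ) with hkfdef
  have hkf : (0 : ℝ) < kf := by
    have := Nat.factorial_pos k
    positivity
  obtain ⟨b, hb⟩ := hbdd
  obtain ⟨m0, hm0⟩ := hΓ d0 hd0Γ
  obtain ⟨lb, hlbP, hlb⟩ :=
    Int.exists_least_of_bdd (P := fun m : ℤ => ((m : ℝ) / kf ∈ Γ ∧ s ((m : ℝ) / kf) ≠ 0))
      ⟨⌈b * kf⌉, fun z hz => by
        have h1 : b ≤ (z : ℝ) / kf := hb hz.1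
        have h2 : b * kf ≤ (z : ℝ) := by
          rw [le_div_iff₀ hkf] at h1; exact h1
        exact Int.ceil_le.mpr h2⟩
      ⟨m0, ⟨hm0 ▸ hd0Γ, hm0 ▸ hd0⟩⟩
  set dmin : ℝ := (lb : ℝ) / kf with hdmindef
  have hdminΓ : dmin ∈ Γ := hlbP.1
  have hsd : s dmin ≠ 0 := hlbP.2
  have hleast : IsLeast {d | d ∈ Γ ∧ s d ≠ 0} dmin := by
    constructor
    · exact ⟨hdminΓ, hsd⟩
    · rintro d ⟨hdΓ, hds⟩
      obtain ⟨m, rfl⟩ := hΓ d hdΓ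
      have := hlb m ⟨hdΓ, hds⟩
      exact (div_le_div_iff_of_pos_right hkf).mpr (by exact_mod_cast this)
  refine ⟨dmin, hleast, ?_⟩
  -- notation
  set a : ℝ := ‖s dmin‖ ^ 2 with hadef
  have ha : 0 < a := pow_pos (norm_pos_iff.mpr hsd) 2
  set C : ℝ := ∑' d : Γ, ‖s d.1‖ ^ 2 with hCdef
  have haC : a ≤ C := Summable.le_tsum hsum ⟨dmin, hdminΓ⟩ (fun _ _ => by positivity)
  have hC : 0 < C := lt_of_lt_of_le ha haC
  set F : ℝ → ℝ := fun r => ∑' d : Γ, r ^ (2 * d.1 + 2 * (n : ℝ)) * ‖s d.1‖ ^ 2 with hFdef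
  -- pointwise facts for r ∈ Ioo 0 1
  have key : ∀ r ∈ Ioo (0 : ℝ) 1,
      2 * (dmin + n) * Real.log r + Real.log a ≤ Real.log (F r) ∧
      Real.log (F r) ≤ 2 * (dmin + n) * Real.log r + Real.log C := by
    intro r hr
    obtain ⟨hr0, hr1⟩ := hr
    have hcomp : ∀ d : Γ, r ^ (2 * d.1 + 2 * (n : ℝ)) * ‖s d.1‖ ^ 2 ≤
        r ^ (2 * dmin + 2 * (n : ℝ)) * ‖s d.1‖ ^ 2 := by
      intro d
      by_cases hds : s d.1 = 0
      · simp [hds]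
      · have hge : dmin ≤ d.1 := hleast.2 ⟨d.2, hds⟩
        exact mul_le_mul_of_nonneg_right
          (Real.rpow_le_rpow_of_exponent_ge hr0 hr1.le (by linarith)) (by positivity)
    have hsumr : Summable (fun d : Γ => r ^ (2 * d.1 + 2 * (n : ℝ)) * ‖s d.1‖ ^ 2) :=
      Summable.of_nonneg_of_le (fun d => by positivity) hcomp (hsum.mul_left _)
    have hFge : r ^ (2 * dmin + 2 * (n : ℝ)) * a ≤ F r :=
      Summable.le_tsum hsumr ⟨dmin, hdminΓ⟩ (fun _ _ => by positivity)
    have hFle : F r ≤ r ^ (2 * dmin + 2 * (n : ℝ)) * C := by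
      calc F r ≤ ∑' d : Γ, r ^ (2 * dmin + 2 * (n : ℝ)) * ‖s d.1‖ ^ 2 :=
            Summable.tsum_le_tsum hcomp hsumr (hsum.mul_left _)
        _ = r ^ (2 * dmin + 2 * (n : ℝ)) * C := tsum_mul_left
    have hrp : (0 : ℝ) < r ^ (2 * dmin + 2 * (n : ℝ)) := Real.rpow_pos_of_pos hr0 _
    have hFpos : 0 < F r := lt_of_lt_of_le (by positivity) hFge
    have hlogmul : ∀ c : ℝ, 0 < c →
        Real.log (r ^ (2 * dmin + 2 * (n : ℝ)) * c) =
          2 * (dmin + n) * Real.log r + Real.log c := by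
      intro c hc
      rw [Real.log_mul (ne_of_gt hrp) (ne_of_gt hc), Real.log_rpow hr0]
      ring
    constructor
    · calc 2 * (dmin + n) * Real.log r + Real.log a
          = Real.log (r ^ (2 * dmin + 2 * (n : ℝ)) * a) := (hlogmul a ha).symm
        _ ≤ Real.log (F r) := Real.log_le_log (by positivity) hFge
    · calc Real.log (F r) ≤ Real.log (r ^ (2 * dmin + 2 * (n : ℝ)) * C) :=
            Real.log_le_log hFpos hFle
        _ = 2 * (dmin + n) * Real.log r + Real.log C := hlogmul C hC
  -- the limit
  have hmem : Ioo (0 : ℝ) 1 ∈ nhdsWithin (0 : ℝ) (Ioi 0) :=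
    Ioo_mem_nhdsGT_of_mem ⟨le_refl 0, one_pos⟩
  have hLbot : Tendsto (fun r : ℝ => 2 * Real.log r) (nhdsWithin 0 (Ioi 0)) atBot :=
    (tendsto_const_mul_atBot_of_pos two_pos).mpr Real.tendsto_log_nhdsGT_zero
  have hinv : Tendsto (fun r : ℝ => (2 * Real.log r)⁻¹) (nhdsWithin 0 (Ioi 0)) (nhds 0) := by
    have h1 : Tendsto (fun r : ℝ => -(2 * Real.log r)) (nhdsWithin 0 (Ioi 0)) atTop :=
      tendsto_neg_atBot_atTop.comp hLbot
    have h2 := h1.inv_tendsto_atTop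
    have h3 : Tendsto (fun r : ℝ => -(-(2 * Real.log r))⁻¹) (nhdsWithin 0 (Ioi 0)) (nhds (-0)) :=
      h2.neg
    simp only [inv_neg, neg_neg, neg_zero] at h3
    exact h3
  have hlow : Tendsto (fun r : ℝ => dmin + Real.log C * (2 * Real.log r)⁻¹)
      (nhdsWithin 0 (Ioi 0)) (nhds dmin) := by
    have h := (tendsto_const_nhds (x := Real.log C) (f := nhdsWithin (0:ℝ) (Ioi 0))).mul hinv
    have h2 := (tendsto_const_nhds (x := dmin) (f := nhdsWithin (0:ℝ) (Ioi 0))).add h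
    simpa using h2
  have hhigh : Tendsto (fun r : ℝ => dmin + Real.log a * (2 * Real.log r)⁻¹)
      (nhdsWithin 0 (Ioi 0)) (nhds dmin) := by
    have h := (tendsto_const_nhds (x := Real.log a) (f := nhdsWithin (0:ℝ) (Ioi 0))).mul hinv
    have h2 := (tendsto_const_nhds (x := dmin) (f := nhdsWithin (0:ℝ) (Ioi 0))).add h
    simpa using h2
  refine tendsto_of_tendsto_of_tendsto_of_le_of_le' hlow hhigh ?_ ?_
  · filter_upwards [hmem] with r hr
    obtain ⟨h1, h2⟩ := key r hr
    have hlr : Real.log r < 0 := Real.log_neg hr.1 hr.2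
    have hL : 2 * Real.log r < 0 := by linarith
    have hLne : 2 * Real.log r ≠ 0 := ne_of_lt hL
    have := mul_le_mul_of_nonpos_right h2 (inv_nonpos.mpr hL.le)
    have heq : (2 * (dmin + n) * Real.log r + Real.log C) * (2 * Real.log r)⁻¹ =
        dmin + n + Real.log C * (2 * Real.log r)⁻¹ := by
      field_simp [hlr.ne]
    rw [heq] at this
    have hdiv : Real.log (F r) / (2 * Real.log r) = Real.log (F r) * (2 * Real.log r)⁻¹ :=
      div_eq_mul_inv _ _
    show dmin + Real.log C * (2 * Real.log r)⁻¹ ≤ Real.log (F r) / (2 * Real.log r) - n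
    rw [hdiv]
    linarith
  · filter_upwards [hmem] with r hr
    obtain ⟨h1, h2⟩ := key r hr
    have hlr : Real.log r < 0 := Real.log_neg hr.1 hr.2
    have hL : 2 * Real.log r < 0 := by linarith
    have hLne : 2 * Real.log r ≠ 0 := ne_of_lt hL
    have := mul_le_mul_of_nonpos_right h1 (inv_nonpos.mpr hL.le)
    have heq : (2 * (dmin + n) * Real.log r + Real.log a) * (2 * Real.log r)⁻¹ =
        dmin + n + Real.log a * (2 * Real.log r)⁻¹ := by
      field_simp [hlr.ne]
    rw [heq] at this
    have hdiv : Real.log (F r) / (2 * Real.log r) = Real.log (F r) * (2 * Real.log r)⁻¹ :=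
      div_eq_mul_inv _ _
    show Real.log (F r) / (2 * Real.log r) - n ≤ dmin + Real.log a * (2 * Real.log r)⁻¹
    rw [hdiv]
    linarith
end
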